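/- arXiv:1301.2082 — 2 statements merged into one kernel-verified Lean document; each statement's English description precedes it below -/
import Mathlib

section
/- If D is an open disc internally tangent to the unit circle at ζ ∈ 𝕋, then the set 𝔻 \ D is minimally thin at ζ. -/
open Metric MeasureTheory Set Filter Topology

noncomputable section

/-- The open unit disc in the complex plane. -/
def unitDisc : Set ℂ := {z | ‖z‖ < 1}

/-- The unit circle. -/
def unitCircleSet : Set ℂ := {z | ‖z‖ = 1}

/-- The Poisson kernel of the unit disc. -/
def poissonKernelD (z ζ : ℂ) : ℝ := (1 - ‖z‖ ^ 2) / ‖z - ζ‖ ^ 2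

/-- Average of a real-valued function over the circle of centre `z` and radius `r`. -/
def circleAvg (u : ℂ → ℝ) (z : ℂ) (r : ℝ) : ℝ :=
  (2 * Real.pi)⁻¹ * ∫ θ in (0:ℝ)..(2 * Real.pi), u (z + r * Complex.exp (θ * Complex.I))

/-- Harmonicity on an open set, via the mean value property. -/
def HarmonicOnD (u : ℂ → ℝ) (U : Set ℂ) : Prop :=
  ContinuousOn u U ∧
  ∀ z ∈ U, ∀ r : ℝ, 0 < r → closedBall z r ⊆ U → u z = circleAvg u z r

/-- Superharmonicity on an open set, via the super-mean value property. -/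
def SuperharmonicOnD (u : ℂ → ℝ) (U : Set ℂ) : Prop :=
  LowerSemicontinuousOn u U ∧
  ∀ z ∈ U, ∀ r : ℝ, 0 < r → closedBall z r ⊆ U → circleAvg u z r ≤ u z

/-- A (Green) potential on the unit disc: a positive superharmonic function whose
greatest harmonic minorant is `0`. -/
def IsGreenPotential (u : ℂ → ℝ) : Prop :=
  SuperharmonicOnD u unitDisc ∧ (∀ z ∈ unitDisc, 0 < u z) ∧
  ∀ h : ℂ → ℝ, HarmonicOnD h unitDisc → (∀ z ∈ unitDisc, h z ≤ u z) →
    ∀ z ∈ unitDisc, h z ≤ 0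

/-- A set `E ⊆ 𝔻` is minimally thin at `ζ ∈ 𝕋` if some Green potential on `𝔻`
dominates the Poisson kernel `P(·,ζ)` on `E`. -/
def MinimallyThin (E : Set ℂ) (ζ : ℂ) : Prop :=
  ∃ u : ℂ → ℝ, IsGreenPotential u ∧ ∀ z ∈ E, poissonKernelD z ζ ≤ u z

/-- The `N`-th Taylor partial sum of `f` about `ξ`. -/
def taylorSum (f : ℂ → ℂ) (ξ : ℂ) (N : ℕ) (z : ℂ) : ℂ :=
  ∑ n ∈ Finset.range (N + 1), (iteratedDeriv n f ξ / (n.factorial : ℂ)) * (z - ξ) ^ n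

/-- `f` possesses a universal Taylor series about `ξ` on `Ω`: `f` is holomorphic on `Ω`,
and for every compact `K ⊆ ℂ \ Ω` with connected complement and every continuous
`g : K → ℂ` holomorphic on the interior of `K`, some subsequence of the Taylor partial
sums of `f` about `ξ` converges uniformly to `g` on `K`. -/
def IsUTS (Ω : Set ℂ) (ξ : ℂ) (f : ℂ → ℂ) : Prop :=
  DifferentiableOn ℂ f Ω ∧
  ∀ K : Set ℂ, IsCompact K → K ⊆ Ωᶜ → IsConnected Kᶜ →
    ∀ g : ℂ → ℂ, ContinuousOn g K → DifferentiableOn ℂ g (interior K) →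
      ∀ ε : ℝ, 0 < ε → ∀ M : ℕ, ∃ N ≥ M, ∀ z ∈ K, ‖taylorSum f ξ N z - g z‖ ≤ ε

/-- Truncated Stolz angular approach region at `ζ ∈ 𝕋`. -/
def stolz (α t : ℝ) (ζ : ℂ) : Set ℂ :=
  {z | ‖z - ζ‖ < α * (1 - ‖z‖) ∧ α * (1 - ‖z‖) < α * t}

/-- Extended-real logarithm, with `log 0 = ⊥`. -/
def elog (x : ℝ) : EReal := if x = 0 then ⊥ else ((Real.log x : ℝ) : EReal)

/-- Average over a circle of the real parts of an extended-real-valued function. -/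
def circleAvgE (u : ℂ → EReal) (z : ℂ) (r : ℝ) : ℝ :=
  (2 * Real.pi)⁻¹ *
    ∫ θ in (0:ℝ)..(2 * Real.pi), (u (z + r * Complex.exp (θ * Complex.I))).toReal

/-- Subharmonicity on an open set for extended-real-valued functions. -/
def SubharmonicOnE (u : ℂ → EReal) (U : Set ℂ) : Prop :=
  UpperSemicontinuousOn u U ∧
  ∀ z ∈ U, ∀ r : ℝ, 0 < r → closedBall z r ⊆ U →
    u z ≤ ((circleAvgE u z r : ℝ) : EReal)

/-- The strip `{-1 < Re z < 1}`. -/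
def strip : Set ℂ := {z | -1 < z.re ∧ z.re < 1}

namespace MTaux

lemma circleAvg_eq (u : ℂ → ℝ) (z : ℂ) (r : ℝ) :
    circleAvg u z r = (2 * Real.pi)⁻¹ * ∫ θ in (0:ℝ)..(2 * Real.pi), u (circleMap z r θ) := rfl

lemma cont_comp {f : ℂ → ℝ} {s : Set ℂ} (hf : ContinuousOn f s) (z : ℂ) {r : ℝ}
    (hr : 0 ≤ r) (hs : sphere z r ⊆ s) : Continuous fun θ : ℝ => f (circleMap z r θ) :=
  hf.comp_continuous (continuous_circleMap z r) fun θ => hs (circleMap_mem_sphere z hr θ)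

lemma intInt {f : ℂ → ℝ} {s : Set ℂ} (hf : ContinuousOn f s) (z : ℂ) {r : ℝ}
    (hr : 0 ≤ r) (hs : sphere z r ⊆ s) :
    IntervalIntegrable (fun θ : ℝ => f (circleMap z r θ)) volume 0 (2 * Real.pi) :=
  (cont_comp hf z hr hs).intervalIntegrable _ _

lemma circleAvg_congr {f g : ℂ → ℝ} {z : ℂ} {r : ℝ} (hr : 0 ≤ r)
    (h : ∀ w ∈ sphere z r, f w = g w) : circleAvg f z r = circleAvg g z r := by
  rw [circleAvg_eq, circleAvg_eq]
  congr 1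
  exact intervalIntegral.integral_congr fun θ _ => h _ (circleMap_mem_sphere z hr θ)

lemma circleAvg_const (C : ℝ) (z : ℂ) (r : ℝ) : circleAvg (fun _ => C) z r = C := by
  rw [circleAvg_eq, intervalIntegral.integral_const, smul_eq_mul, sub_zero]
  have : (2 : ℝ) * Real.pi ≠ 0 := by positivity
  field_simp

lemma circleAvg_add {f g : ℂ → ℝ} {z : ℂ} {r : ℝ}
    (hf : IntervalIntegrable (fun θ : ℝ => f (circleMap z r θ)) volume 0 (2 * Real.pi))
    (hg : IntervalIntegrable (fun θ : ℝ => g (circleMap z r θ)) volume 0 (2 * Real.pi)) :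
    circleAvg (fun w => f w + g w) z r = circleAvg f z r + circleAvg g z r := by
  rw [circleAvg_eq, circleAvg_eq, circleAvg_eq]
  rw [show (fun θ : ℝ => (fun w => f w + g w) (circleMap z r θ))
      = fun θ : ℝ => f (circleMap z r θ) + g (circleMap z r θ) from rfl]
  rw [intervalIntegral.integral_add hf hg]
  ring

lemma circleAvg_const_mul (k : ℝ) (f : ℂ → ℝ) (z : ℂ) (r : ℝ) :
    circleAvg (fun w => k * f w) z r = k * circleAvg f z r := by
  rw [circleAvg_eq, circleAvg_eq]
  rw [show (fun θ : ℝ => (fun w => k * f w) (circleMap z r θ))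
      = fun θ : ℝ => k * f (circleMap z r θ) from rfl]
  rw [intervalIntegral.integral_const_mul]
  ring

lemma circleAvg_mono {f g : ℂ → ℝ} {z : ℂ} {r : ℝ} (hr : 0 ≤ r)
    (hf : IntervalIntegrable (fun θ : ℝ => f (circleMap z r θ)) volume 0 (2 * Real.pi))
    (hg : IntervalIntegrable (fun θ : ℝ => g (circleMap z r θ)) volume 0 (2 * Real.pi))
    (hle : ∀ w ∈ sphere z r, f w ≤ g w) : circleAvg f z r ≤ circleAvg g z r := by
  rw [circleAvg_eq, circleAvg_eq]
  have h2π : (0:ℝ) ≤ 2 * Real.pi := by positivity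
  refine mul_le_mul_of_nonneg_left ?_ (by positivity)
  exact intervalIntegral.integral_mono_on h2π hf hg fun θ _ =>
    hle _ (circleMap_mem_sphere z hr θ)

/-- Mean value property for real parts of holomorphic functions. -/
lemma circleAvg_re_of_diffContOnCl {f : ℂ → ℂ} {z : ℂ} {r : ℝ} (hr : 0 < r)
    (hf : DiffContOnCl ℂ f (ball z r)) :
    circleAvg (fun w => (f w).re) z r = (f z).re := by
  have hint := hf.circleIntegral_sub_inv_smul (mem_ball_self hr)
  rw [circleIntegral] at hint
  simp only [deriv_circleMap, smul_eq_mul, circleMap_sub_center] at hint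
  have hcont : ContinuousOn f (closedBall z r) := by
    have := hf.continuousOn
    rwa [closure_ball z hr.ne'] at this
  have hccomp : Continuous fun θ : ℝ => f (circleMap z r θ) :=
    hcont.comp_continuous (continuous_circleMap z r)
      fun θ => sphere_subset_closedBall (circleMap_mem_sphere z hr.le θ)
  have heq : (fun θ : ℝ => circleMap 0 r θ * Complex.I *
      ((circleMap 0 r θ)⁻¹ * f (circleMap z r θ)))
      = fun θ : ℝ => Complex.I * f (circleMap z r θ) := by
    funext θ
    have h0 : circleMap 0 r θ ≠ 0 := circleMap_ne_center hr.ne'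
    field_simp
  rw [show (∫ θ in (0:ℝ)..(2*Real.pi), circleMap 0 r θ * Complex.I *
      ((circleMap 0 r θ)⁻¹ * f (circleMap z r θ)))
      = ∫ θ in (0:ℝ)..(2*Real.pi), Complex.I * f (circleMap z r θ) from by rw [heq]] at hint
  rw [intervalIntegral.integral_const_mul] at hint
  have hI : (∫ θ in (0:ℝ)..(2*Real.pi), f (circleMap z r θ)) = 2 * Real.pi * f z := by
    have := mul_left_cancel₀ Complex.I_ne_zero
      (by rw [hint]; push_cast; ring : Complex.I * (∫ θ in (0:ℝ)..(2*Real.pi), f (circleMap z r θ))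
        = Complex.I * (2 * Real.pi * f z))
    exact this
  have hre : (∫ θ in (0:ℝ)..(2*Real.pi), (f (circleMap z r θ)).re)
      = (∫ θ in (0:ℝ)..(2*Real.pi), f (circleMap z r θ)).re := by
    have := Complex.reCLM.intervalIntegral_comp_comm (hccomp.intervalIntegrable (μ := volume) 0 (2*Real.pi))
    simpa using this
  rw [circleAvg_eq]
  rw [show (fun θ : ℝ => (fun w => (f w).re) (circleMap z r θ))
      = fun θ : ℝ => (f (circleMap z r θ)).re from rfl]
  rw [hre, hI]
  have h2 : (2 * Real.pi : ℝ) ≠ 0 := by positivity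
  simp only [Complex.ofReal_mul, Complex.mul_re, Complex.ofReal_re, Complex.ofReal_im,
    Complex.ofReal_ofNat]
  push_cast
  field_simp
  simp only [Complex.mul_im, Complex.re_ofNat, Complex.im_ofNat, Complex.ofReal_im,
    Complex.ofReal_re]
  ring



lemma normSq_eq (x : ℂ) : ‖x‖ ^ 2 = x.re ^ 2 + x.im ^ 2 := by
  rw [Complex.sq_norm, Complex.normSq_apply]; ring

lemma ne_boundary {z ζ : ℂ} (hz : z ∈ unitDisc) (hζ : ‖ζ‖ = 1) : z ≠ ζ := by
  intro e; subst e; simp only [unitDisc, mem_setOf_eq, hζ] at hz; exact lt_irrefl 1 hz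

lemma poisson_eq_re {ζ w : ℂ} (hζ : ‖ζ‖ = 1) (hw : w ≠ ζ) :
    poissonKernelD w ζ = ((ζ + w) / (ζ - w)).re := by
  have h1 : ζ - w ≠ 0 := sub_ne_zero.mpr (Ne.symm hw)
  have h2 : Complex.normSq (ζ - w) ≠ 0 := by
    simpa [Complex.normSq_eq_zero] using h1
  have hznorm : ‖w - ζ‖ ^ 2 = Complex.normSq (ζ - w) := by
    rw [normSq_eq, Complex.normSq_apply]
    simp [Complex.sub_re, Complex.sub_im]; ring
  have hζsq : ζ.re ^ 2 + ζ.im ^ 2 = 1 := by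
    have := normSq_eq ζ; rw [hζ] at this; linarith [this]
  rw [Complex.div_re, poissonKernelD, hznorm, normSq_eq]
  rw [Complex.normSq_apply]
  field_simp
  congr 1
  simp only [Complex.sub_re, Complex.sub_im, Complex.add_re, Complex.add_im]
  nlinarith [hζsq]

lemma poisson_pos {z ζ : ℂ} (hz : z ∈ unitDisc) (hζ : ‖ζ‖ = 1) : 0 < poissonKernelD z ζ := by
  have h1 : ‖z‖ < 1 := hz
  have h2 : z ≠ ζ := ne_boundary hz hζ
  have h3 : (0:ℝ) < ‖z - ζ‖ := by
    simpa [norm_pos_iff, sub_ne_zero] using h2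
  have : (0:ℝ) < 1 - ‖z‖ ^ 2 := by nlinarith [norm_nonneg z]
  exact div_pos this (by positivity)

lemma poisson_contOn (ζ : ℂ) (hζ : ‖ζ‖ = 1) :
    ContinuousOn (fun w => poissonKernelD w ζ) unitDisc := by
  intro w hw
  apply ContinuousAt.continuousWithinAt
  have h2 : w ≠ ζ := ne_boundary hw hζ
  have h3 : ‖w - ζ‖ ^ 2 ≠ 0 := by
    have h4 : w - ζ ≠ 0 := sub_ne_zero.mpr h2
    have : ‖w - ζ‖ ≠ 0 := norm_ne_zero_iff.mpr h4
    positivity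
  exact (by fun_prop : ContinuousAt (fun w : ℂ => 1 - ‖w‖^2) w).div (by fun_prop) h3

lemma log_contOn (ζ : ℂ) (hζ : ‖ζ‖ = 1) :
    ContinuousOn (fun w => Real.log ‖w - ζ‖) unitDisc := by
  intro w hw
  apply ContinuousAt.continuousWithinAt
  have h3 : ‖w - ζ‖ ≠ 0 :=
    norm_ne_zero_iff.mpr (sub_ne_zero.mpr (ne_boundary hw hζ))
  have h4 : ContinuousAt (fun w : ℂ => ‖w - ζ‖) w := by fun_prop
  exact h4.log h3

lemma mvp_poisson {ζ z : ℂ} {r : ℝ} (hζ : ‖ζ‖ = 1) (hr : 0 < r)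
    (hsub : closedBall z r ⊆ unitDisc) :
    circleAvg (fun w => poissonKernelD w ζ) z r = poissonKernelD z ζ := by
  have hne : ∀ w ∈ closedBall z r, w ≠ ζ := fun w hw => ne_boundary (hsub hw) hζ
  have hdiff : DifferentiableOn ℂ (fun w => (ζ + w) / (ζ - w)) (closedBall z r) := by
    intro w hw
    have h1 : ζ - w ≠ 0 := sub_ne_zero.mpr (Ne.symm (hne w hw))
    exact ((differentiableAt_const ζ |>.add differentiableAt_id).div
      ((differentiableAt_const ζ).sub differentiableAt_id) h1).differentiableWithinAt
  have hd : DiffContOnCl ℂ (fun w => (ζ + w) / (ζ - w)) (ball z r) :=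
    (hdiff.mono closure_ball_subset_closedBall).diffContOnCl
  rw [circleAvg_congr hr.le (g := fun w => ((ζ + w) / (ζ - w)).re)
      (fun w hw => poisson_eq_re hζ (hne w (sphere_subset_closedBall hw)))]
  rw [circleAvg_re_of_diffContOnCl hr hd]
  exact (poisson_eq_re hζ (hne z (mem_closedBall_self hr.le))).symm

set_option maxHeartbeats 1000000 in
lemma mvp_log {ζ z : ℂ} {r : ℝ} (hζ : ‖ζ‖ = 1) (hr : 0 < r)
    (hsub : closedBall z r ⊆ unitDisc) :
    circleAvg (fun w => Real.log ‖w - ζ‖) z r = Real.log ‖z - ζ‖ := by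
  have hz : z ∈ unitDisc := hsub (mem_closedBall_self hr.le)
  have ha0 : z - ζ ≠ 0 := sub_ne_zero.mpr (ne_boundary hz hζ)
  have hanorm : 0 < ‖z - ζ‖ := norm_pos_iff.mpr ha0
  have hra : r < ‖z - ζ‖ := by
    by_contra hcon
    push_neg at hcon
    have : ζ ∈ closedBall z r := by
      rw [mem_closedBall, dist_comm, dist_eq_norm]; exact hcon
    have h1 : ‖ζ‖ < 1 := hsub this
    rw [hζ] at h1; exact lt_irrefl 1 h1
  set f : ℂ → ℂ := fun w => Complex.log ((w - ζ) * (starRingEnd ℂ) (z - ζ)) with hfdef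
  have hdiff : ∀ w ∈ ball z ‖z - ζ‖, DifferentiableAt ℂ f w := by
    intro w hw
    have hwz : ‖w - z‖ < ‖z - ζ‖ := by rw [← dist_eq_norm]; exact mem_ball.mp hw
    have hre : 0 < ((w - ζ) * (starRingEnd ℂ) (z - ζ)).re := by
      have hsplit : (w - ζ) * (starRingEnd ℂ) (z - ζ)
          = (z - ζ) * (starRingEnd ℂ) (z - ζ) + (w - z) * (starRingEnd ℂ) (z - ζ) := by ring
      rw [hsplit, Complex.add_re, Complex.mul_conj]
      have h2 : |((w - z) * (starRingEnd ℂ) (z - ζ)).re| ≤ ‖w - z‖ * ‖z - ζ‖ := by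
        calc |((w - z) * (starRingEnd ℂ) (z - ζ)).re|
            ≤ ‖(w - z) * (starRingEnd ℂ) (z - ζ)‖ := Complex.abs_re_le_norm _
          _ = ‖w - z‖ * ‖z - ζ‖ := by
              rw [norm_mul, Complex.norm_conj]
      have h3 : (Complex.normSq (z - ζ) : ℝ) = ‖z - ζ‖ ^ 2 := by
        rw [← Complex.sq_norm]
      rw [Complex.ofReal_re]
      have h4 := abs_le.mp h2
      nlinarith [h4.1, hanorm]
    have hslit : ((w - ζ) * (starRingEnd ℂ) (z - ζ)) ∈ Complex.slitPlane := Or.inl hre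
    have hinner : DifferentiableAt ℂ (fun w : ℂ => (w - ζ) * (starRingEnd ℂ) (z - ζ)) w := by
      fun_prop
    exact (Complex.differentiableAt_log hslit).comp w hinner
  have hd : DiffContOnCl ℂ f (ball z r) := by
    constructor
    · exact fun w hw => (hdiff w (ball_subset_ball hra.le hw)).differentiableWithinAt
    · intro w hw
      rw [closure_ball z hr.ne'] at hw
      exact (hdiff w (closedBall_subset_ball hra hw)).continuousAt.continuousWithinAt
  have hre_eq : ∀ w : ℂ, w ≠ ζ → (f w).re = Real.log ‖w - ζ‖ + Real.log ‖z - ζ‖ := by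
    intro w hw
    have hw0 : w - ζ ≠ 0 := sub_ne_zero.mpr hw
    rw [hfdef]
    simp only
    rw [Complex.log_re, norm_mul, Complex.norm_conj]
    rw [Real.log_mul (norm_ne_zero_iff.mpr hw0)
      (norm_ne_zero_iff.mpr ha0)]
  have hfcont : ContinuousOn (fun w => (f w).re) (sphere z r) := by
    intro w hw
    have hwball : w ∈ ball z ‖z - ζ‖ := closedBall_subset_ball hra (sphere_subset_closedBall hw)
    exact (Complex.continuous_re.continuousAt.comp (hdiff w hwball).continuousAt).continuousWithinAt
  have hint1 : IntervalIntegrable (fun θ : ℝ => (f (circleMap z r θ)).re) volume 0 (2 * Real.pi) :=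
    intInt hfcont z hr.le (subset_refl _)
  have hint2 : IntervalIntegrable (fun θ : ℝ => (fun _ : ℂ => -Real.log ‖z - ζ‖) (circleMap z r θ))
      volume 0 (2 * Real.pi) := intervalIntegrable_const
  calc circleAvg (fun w => Real.log ‖w - ζ‖) z r
      = circleAvg (fun w => (f w).re + -Real.log ‖z - ζ‖) z r := by
        apply circleAvg_congr hr.le
        intro w hw
        have hwne : w ≠ ζ := ne_boundary (hsub (sphere_subset_closedBall hw)) hζ
        rw [hre_eq w hwne]; ring
    _ = circleAvg (fun w => (f w).re) z r + circleAvg (fun _ : ℂ => -Real.log ‖z - ζ‖) z r :=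
        circleAvg_add (f := fun w => (f w).re) (g := fun _ : ℂ => -Real.log ‖z - ζ‖) hint1 hint2
    _ = Real.log ‖z - ζ‖ := by
        rw [circleAvg_re_of_diffContOnCl hr hd, circleAvg_const,
          hre_eq z (ne_boundary hz hζ)]
        ring

lemma exists_theta {p w : ℂ} {s : ℝ} (hs : 0 < s) (hw : w ∈ sphere p s) :
    ∃ θ ∈ Ico (0:ℝ) (2 * Real.pi), circleMap p s θ = w := by
  have habs : ‖w - p‖ = s := by
    rw [← dist_eq_norm]
    exact mem_sphere.mp hw
  have hkey : (s : ℂ) * Complex.exp ((Complex.arg (w - p) : ℂ) * Complex.I) = w - p := by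
    have := Complex.norm_mul_exp_arg_mul_I (w - p)
    rw [habs] at this
    exact this
  have hmap : circleMap p s (Complex.arg (w - p)) = w := by
    rw [circleMap, hkey]; ring
  rcases le_or_gt 0 (Complex.arg (w - p)) with hcase | hcase
  · refine ⟨Complex.arg (w - p), ⟨hcase, ?_⟩, hmap⟩
    have := Complex.arg_le_pi (w - p)
    linarith [Real.pi_pos]
  · refine ⟨Complex.arg (w - p) + 2 * Real.pi, ⟨?_, ?_⟩, ?_⟩
    · linarith [Complex.neg_pi_lt_arg (w - p), Real.pi_pos]
    · linarith
    · rw [periodic_circleMap p s (Complex.arg (w - p))]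
      exact hmap

lemma eq_on_sphere_of_max {h : ℂ → ℝ} (hh : HarmonicOnD h unitDisc) {p : ℂ} {s : ℝ}
    (hs : 0 < s) (hsub : closedBall p s ⊆ unitDisc)
    (hmax : ∀ w ∈ sphere p s, h w ≤ h p) : ∀ w ∈ sphere p s, h w = h p := by
  intro w hw
  by_contra hne
  have hlt : h w < h p := lt_of_le_of_ne (hmax w hw) hne
  have hmvp := hh.2 p (hsub (mem_closedBall_self hs.le)) s hs hsub
  have hcont : Continuous fun θ : ℝ => h (circleMap p s θ) :=
    cont_comp (hh.1.mono (fun x hx => hsub (sphere_subset_closedBall hx))) p hs.le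
      (subset_refl _)
  set φ : ℝ → ℝ := fun θ => h p - h (circleMap p s θ) with hφ
  have hφcont : Continuous φ := continuous_const.sub hcont
  have hφnn : ∀ θ, 0 ≤ φ θ := fun θ => sub_nonneg.mpr (hmax _ (circleMap_mem_sphere p hs.le θ))
  have h2pi : (0:ℝ) < 2 * Real.pi := by positivity
  have hI : ∫ θ in (0:ℝ)..(2 * Real.pi), φ θ = 0 := by
    rw [hφ]
    rw [intervalIntegral.integral_sub intervalIntegrable_const
      (hcont.intervalIntegrable (μ := volume) _ _), intervalIntegral.integral_const]
    have h2 : ∫ θ in (0:ℝ)..(2 * Real.pi), h (circleMap p s θ) = 2 * Real.pi * h p := by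
      have hπ : (2 * Real.pi : ℝ) ≠ 0 := h2pi.ne'
      rw [circleAvg_eq] at hmvp
      field_simp at hmvp
      linarith
    rw [h2]
    simp
  obtain ⟨θw, hθw, hθweq⟩ := exists_theta hs hw
  have hφpos : 0 < φ θw := by
    rw [hφ]; simp only; rw [hθweq]; linarith
  have hUopen : IsOpen {θ : ℝ | 0 < φ θ} := isOpen_lt continuous_const hφcont
  obtain ⟨η, hη, hball⟩ := Metric.isOpen_iff.mp hUopen θw hφpos
  set b := min (θw + η) (2 * Real.pi) with hb
  have hθwb : θw < b := lt_min (by linarith) hθw.2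
  have hsubset : Ioo θw b ⊆ (Function.support φ) ∩ Ioc 0 (2 * Real.pi) := by
    intro θ hθ
    constructor
    · have : θ ∈ ball θw η := by
        rw [mem_ball, Real.dist_eq, abs_lt]
        constructor
        · linarith [hθ.1]
        · have := hθ.2; rw [hb] at this; have := lt_min_iff.mp this; linarith [this.1]
      exact ne_of_gt (hball this)
    · constructor
      · linarith [hθ.1, hθw.1]
      · have := hθ.2; rw [hb] at this; exact le_of_lt (lt_min_iff.mp this).2
  have hpos : 0 < ∫ θ in Ioc (0:ℝ) (2 * Real.pi), φ θ := by
    rw [MeasureTheory.setIntegral_pos_iff_support_of_nonneg_ae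
      (Eventually.of_forall hφnn) (hφcont.intervalIntegrable (μ := volume) 0 (2*Real.pi)).1]
    calc (0 : ENNReal) < volume (Ioo θw b) := by
          rw [Real.volume_Ioo]
          simp [ENNReal.ofReal_pos]
          linarith
      _ ≤ volume ((Function.support φ) ∩ Ioc 0 (2 * Real.pi)) := measure_mono hsubset
  rw [intervalIntegral.integral_of_le h2pi.le] at hI
  rw [hI] at hpos
  exact lt_irrefl 0 hpos

lemma harmonic_le_sphere {h : ℂ → ℝ} (hh : HarmonicOnD h unitDisc) {z₀ : ℂ} {ρ : ℝ}
    (h1 : ‖z₀‖ < ρ) (h2 : ρ < 1) : ∃ y : ℂ, ‖y‖ = ρ ∧ h z₀ ≤ h y := by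
  have hρpos : 0 < ρ := lt_of_le_of_lt (norm_nonneg z₀) h1
  have hKsub : closedBall (0:ℂ) ρ ⊆ unitDisc := by
    intro w hw
    have : ‖w‖ ≤ ρ := mem_closedBall_zero_iff.mp hw
    exact lt_of_le_of_lt this h2
  have hz₀K : z₀ ∈ closedBall (0:ℂ) ρ := by
    rw [mem_closedBall_zero_iff]; exact h1.le
  obtain ⟨p, hpK, hpmax⟩ := (isCompact_closedBall (0:ℂ) ρ).exists_isMaxOn
    ⟨0, mem_closedBall_self hρpos.le⟩ (hh.1.mono hKsub)
  have hpmax' : ∀ w ∈ closedBall (0:ℂ) ρ, h w ≤ h p := fun w hw => hpmax hw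
  by_cases hps : ‖p‖ = ρ
  · exact ⟨p, hps, hpmax' z₀ hz₀K⟩
  · have hplt : ‖p‖ < ρ := lt_of_le_of_ne (mem_closedBall_zero_iff.mp hpK) hps
    set s := ρ - ‖p‖ with hsdef
    have hs : 0 < s := by rw [hsdef]; linarith
    have hsub2 : closedBall p s ⊆ closedBall (0:ℂ) ρ := by
      intro w hw
      rw [mem_closedBall_zero_iff]
      calc ‖w‖ = ‖w - p + p‖ := by ring_nf
        _ ≤ ‖w - p‖ + ‖p‖ := norm_add_le _ _
        _ ≤ s + ‖p‖ := by
            have : dist w p ≤ s := mem_closedBall.mp hw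
            rw [dist_eq_norm] at this; linarith
        _ = ρ := by rw [hsdef]; ring
    have heq := eq_on_sphere_of_max hh hs (hsub2.trans hKsub)
      (fun w hw => hpmax' w (hsub2 (sphere_subset_closedBall hw)))
    by_cases hp0 : p = 0
    · refine ⟨(ρ : ℂ), by simp [abs_of_pos hρpos], ?_⟩
      have hy : (ρ:ℂ) ∈ sphere p s := by
        rw [mem_sphere, dist_eq_norm, hp0, hsdef, hp0]
        simp [abs_of_pos hρpos]
      calc h z₀ ≤ h p := hpmax' z₀ hz₀K
        _ = h (ρ:ℂ) := (heq _ hy).symm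
    · have hpn : 0 < ‖p‖ := norm_pos_iff.mpr hp0
      set y : ℂ := ((ρ / ‖p‖ : ℝ) : ℂ) * p with hydef
      have hyn : ‖y‖ = ρ := by
        rw [hydef, norm_mul, Complex.norm_real, Real.norm_eq_abs,
          abs_of_pos (div_pos hρpos hpn)]
        exact div_mul_cancel₀ ρ hpn.ne'
      have hysph : y ∈ sphere p s := by
        rw [mem_sphere, dist_eq_norm, hydef]
        have : ((ρ / ‖p‖ : ℝ) : ℂ) * p - p = ((ρ / ‖p‖ - 1 : ℝ) : ℂ) * p := by
          push_cast; ring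
        rw [this, norm_mul, Complex.norm_real, Real.norm_eq_abs]
        have hge : (0:ℝ) ≤ ρ / ‖p‖ - 1 := by
          rw [sub_nonneg, le_div_iff₀ hpn]; linarith
        rw [abs_of_nonneg hge, hsdef, sub_mul, div_mul_cancel₀ ρ hpn.ne', one_mul]
      exact ⟨y, hyn, le_trans (hpmax' z₀ hz₀K) (heq y hysph).ge⟩

lemma center_eq {c ζ : ℂ} {r : ℝ} (hr : 0 < r) (hsub : ball c r ⊆ unitDisc)
    (hζ : ‖ζ‖ = 1) (htan : ‖c - ζ‖ = r) : c = ((1 - r : ℝ) : ℂ) * ζ ∧ r ≤ 1 := by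
  have hc1 : ‖c‖ + r ≤ 1 := by
    by_cases hc0 : c = 0
    · subst hc0
      simp only [zero_sub, norm_neg, hζ] at htan
      simp [← htan]
    · have hcn : 0 < ‖c‖ := norm_pos_iff.mpr hc0
      have key : ∀ t : ℝ, 0 < t → t < r → ‖c‖ + t < 1 := by
        intro t h1 h2
        have hq : ((1 + t / ‖c‖ : ℝ) : ℂ) * c ∈ ball c r := by
          rw [mem_ball, dist_eq_norm]
          have he : ((1 + t / ‖c‖ : ℝ) : ℂ) * c - c = ((t / ‖c‖ : ℝ) : ℂ) * c := by
            push_cast; ring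
          rw [he, norm_mul, Complex.norm_real, Real.norm_eq_abs,
            abs_of_nonneg (by positivity), div_mul_cancel₀ t hcn.ne']
          exact h2
        have hmem : ‖((1 + t / ‖c‖ : ℝ) : ℂ) * c‖ < 1 := hsub hq
        have hnq : ‖((1 + t / ‖c‖ : ℝ) : ℂ) * c‖ = ‖c‖ + t := by
          rw [norm_mul, Complex.norm_real, Real.norm_eq_abs,
            abs_of_nonneg (by positivity), add_mul, one_mul, div_mul_cancel₀ t hcn.ne']
        rw [hnq] at hmem
        exact hmem
      by_contra hcon
      push_neg at hcon
      have hdpos : 0 < ‖c‖ + r - 1 := by linarith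
      set t := r - min (r / 2) ((‖c‖ + r - 1) / 2) with ht
      have hmle1 := min_le_left (r / 2) ((‖c‖ + r - 1) / 2)
      have hmle2 := min_le_right (r / 2) ((‖c‖ + r - 1) / 2)
      have hmpos : 0 < min (r / 2) ((‖c‖ + r - 1) / 2) := lt_min (by linarith) (by linarith)
      have h3 := key t (by rw [ht]; linarith) (by rw [ht]; linarith)
      rw [ht] at h3
      linarith
  have hc2 : 1 ≤ r + ‖c‖ := by
    have h1 : ‖ζ‖ ≤ ‖ζ - c‖ + ‖c‖ := by
      calc ‖ζ‖ = ‖ζ - c + c‖ := by ring_nf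
        _ ≤ ‖ζ - c‖ + ‖c‖ := norm_add_le _ _
    rw [norm_sub_rev, htan] at h1
    rw [hζ] at h1
    exact h1
  have hcval : ‖c‖ = 1 - r := by linarith
  have hr1 : r ≤ 1 := by
    have := norm_nonneg c; linarith
  refine ⟨?_, hr1⟩
  have hcsq : c.re ^ 2 + c.im ^ 2 = (1 - r) ^ 2 := by
    have := normSq_eq c; rw [hcval] at this; linarith
  have hζsq : ζ.re ^ 2 + ζ.im ^ 2 = 1 := by
    have := normSq_eq ζ; rw [hζ] at this; linarith
  have htansq : (c.re - ζ.re) ^ 2 + (c.im - ζ.im) ^ 2 = r ^ 2 := by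
    have h1 := normSq_eq (c - ζ)
    rw [htan] at h1
    simp only [Complex.sub_re, Complex.sub_im] at h1
    linarith
  have hzero : (c.re - (1 - r) * ζ.re) ^ 2 + (c.im - (1 - r) * ζ.im) ^ 2 = 0 := by
    nlinarith [hcsq, hζsq, htansq]
  have hre : c.re = (1 - r) * ζ.re := by
    nlinarith [sq_nonneg (c.re - (1 - r) * ζ.re), sq_nonneg (c.im - (1 - r) * ζ.im)]
  have him : c.im = (1 - r) * ζ.im := by
    nlinarith [sq_nonneg (c.re - (1 - r) * ζ.re), sq_nonneg (c.im - (1 - r) * ζ.im)]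
  apply Complex.ext
  · simp [Complex.mul_re, hre]
  · simp [Complex.mul_im, him]

lemma poisson_bound {c ζ z : ℂ} {r : ℝ} (hr : 0 < r) (hc : c = ((1 - r : ℝ) : ℂ) * ζ)
    (hζ : ‖ζ‖ = 1) (hz : z ∈ unitDisc) (hzc : r ≤ ‖z - c‖) :
    poissonKernelD z ζ ≤ (1 - r) / r := by
  have hzζ : z ≠ ζ := ne_boundary hz hζ
  have hzζ0 : 0 < ‖z - ζ‖ := norm_pos_iff.mpr (sub_ne_zero.mpr hzζ)
  have hpos : 0 < ‖z - ζ‖ ^ 2 := by positivity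
  rw [poissonKernelD, div_le_div_iff₀ hpos hr]
  have hζsq : ζ.re ^ 2 + ζ.im ^ 2 = 1 := by
    have := normSq_eq ζ; rw [hζ] at this; linarith
  have hzsq := normSq_eq z
  have hzζsq := normSq_eq (z - ζ)
  have hzcsq := normSq_eq (z - c)
  have hzcge : r ^ 2 ≤ ‖z - c‖ ^ 2 := by nlinarith [norm_nonneg (z - c)]
  rw [hzcsq] at hzcge
  simp only [Complex.sub_re, Complex.sub_im, hc, Complex.mul_re, Complex.mul_im,
    Complex.ofReal_re, Complex.ofReal_im] at hzcge hzζsq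
  rw [hzζsq, hzsq]
  nlinarith [hzcge, hζsq]

lemma harmonic_sub_log {h : ℂ → ℝ} (hh : HarmonicOnD h unitDisc) {ζ : ℂ} (hζ : ‖ζ‖ = 1)
    (δ : ℝ) :
    HarmonicOnD (fun x => h x - δ * (Real.log 2 - Real.log ‖x - ζ‖)) unitDisc := by
  have hlogc : ContinuousOn (fun x : ℂ => Real.log ‖x - ζ‖) unitDisc := log_contOn ζ hζ
  constructor
  · exact hh.1.sub (continuousOn_const.mul (continuousOn_const.sub hlogc))
  · intro z hz s hs hcb
    have hsph : sphere z s ⊆ unitDisc := fun x hx => hcb (sphere_subset_closedBall hx)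
    have hih := intInt hh.1 z hs.le hsph
    have hgc : ContinuousOn (fun x : ℂ => -(δ * (Real.log 2 - Real.log ‖x - ζ‖))) unitDisc :=
      (continuousOn_const.mul (continuousOn_const.sub hlogc)).neg
    have hig := intInt hgc z hs.le hsph
    have hlogint := intInt hlogc z hs.le hsph
    have hδlogint : IntervalIntegrable
        (fun θ : ℝ => (fun x : ℂ => δ * Real.log ‖x - ζ‖) (circleMap z s θ))
        volume 0 (2 * Real.pi) := intInt (continuousOn_const.mul hlogc) z hs.le hsph
    have hg : circleAvg (fun x : ℂ => -(δ * (Real.log 2 - Real.log ‖x - ζ‖))) z s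
        = -(δ * (Real.log 2 - Real.log ‖z - ζ‖)) := by
      calc circleAvg (fun x : ℂ => -(δ * (Real.log 2 - Real.log ‖x - ζ‖))) z s
          = circleAvg (fun x : ℂ => δ * Real.log ‖x - ζ‖ + -(δ * Real.log 2)) z s := by
            apply circleAvg_congr hs.le; intro x _; ring
        _ = circleAvg (fun x : ℂ => δ * Real.log ‖x - ζ‖) z s
            + circleAvg (fun _ : ℂ => -(δ * Real.log 2)) z s :=
            circleAvg_add (f := fun x : ℂ => δ * Real.log ‖x - ζ‖)
              (g := fun _ : ℂ => -(δ * Real.log 2)) hδlogint intervalIntegrable_const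
        _ = δ * Real.log ‖z - ζ‖ + -(δ * Real.log 2) := by
            rw [circleAvg_const_mul δ (fun x : ℂ => Real.log ‖x - ζ‖), mvp_log hζ hs hcb,
              circleAvg_const]
        _ = -(δ * (Real.log 2 - Real.log ‖z - ζ‖)) := by ring
    calc (fun x => h x - δ * (Real.log 2 - Real.log ‖x - ζ‖)) z
        = h z + -(δ * (Real.log 2 - Real.log ‖z - ζ‖)) := by ring
      _ = circleAvg h z s + circleAvg (fun x : ℂ => -(δ * (Real.log 2 - Real.log ‖x - ζ‖))) z s := by
          rw [← hh.2 z hz s hs hcb, hg]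
      _ = circleAvg (fun x => h x + -(δ * (Real.log 2 - Real.log ‖x - ζ‖))) z s :=
          (circleAvg_add (f := h) (g := fun x : ℂ => -(δ * (Real.log 2 - Real.log ‖x - ζ‖)))
            hih hig).symm
      _ = circleAvg (fun x => h x - δ * (Real.log 2 - Real.log ‖x - ζ‖)) z s := by
          apply circleAvg_congr hs.le; intro x _; ring

lemma minorant_nonpos {ζ : ℂ} (hζ : ‖ζ‖ = 1) {B : ℝ} (hB : 0 < B) {h : ℂ → ℝ}
    (hh : HarmonicOnD h unitDisc)
    (hle : ∀ z ∈ unitDisc, h z ≤ min (2 * poissonKernelD z ζ) B) :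
    ∀ z ∈ unitDisc, h z ≤ 0 := by
  intro z₀ hz₀
  have hz₀n : ‖z₀‖ < 1 := hz₀
  have hz₀ζ0 : 0 < ‖z₀ - ζ‖ := norm_pos_iff.mpr (sub_ne_zero.mpr (ne_boundary hz₀ hζ))
  have hz₀ζ2 : ‖z₀ - ζ‖ < 2 := by
    calc ‖z₀ - ζ‖ ≤ ‖z₀‖ + ‖ζ‖ := norm_sub_le _ _
      _ < 2 := by rw [hζ]; linarith
  have hlogpos : 0 < Real.log 2 - Real.log ‖z₀ - ζ‖ := by
    have := Real.log_lt_log hz₀ζ0 hz₀ζ2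
    linarith
  have key : ∀ δ : ℝ, 0 < δ → h z₀ ≤ δ * (Real.log 2 - Real.log ‖z₀ - ζ‖) := by
    intro δ hδ
    have hwharm := harmonic_sub_log hh hζ δ
    set η := 2 * Real.exp (-(B / δ)) with hη
    have hη0 : 0 < η := by positivity
    have hlogη : δ * (Real.log 2 - Real.log η) = B := by
      rw [hη, Real.log_mul two_ne_zero (Real.exp_ne_zero _), Real.log_exp]
      field_simp
      ring
    have hwle : ∀ γ : ℝ, 0 < γ → h z₀ - δ * (Real.log 2 - Real.log ‖z₀ - ζ‖) ≤ γ := by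
      intro γ hγ
      set ρ := max ((1 + ‖z₀‖) / 2) (1 - γ * η ^ 2 / 4) with hρ
      have hρ1 : ρ < 1 := by
        rw [hρ]; apply max_lt
        · linarith
        · nlinarith [mul_pos hγ (pow_pos hη0 2)]
      have hρz : ‖z₀‖ < ρ := lt_of_lt_of_le (by linarith) (le_max_left _ _)
      have hρ0 : 0 < ρ := lt_of_le_of_lt (norm_nonneg z₀) hρz
      have hρge : 1 - γ * η ^ 2 / 4 ≤ ρ := le_max_right _ _
      obtain ⟨y, hyn, hwy⟩ := harmonic_le_sphere hwharm hρz hρ1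
      have hy𝔻 : y ∈ unitDisc := by
        show ‖y‖ < 1
        rw [hyn]; exact hρ1
      have hyζ0 : 0 < ‖y - ζ‖ := norm_pos_iff.mpr (sub_ne_zero.mpr (ne_boundary hy𝔻 hζ))
      have hyζ2 : ‖y - ζ‖ ≤ 2 := by
        calc ‖y - ζ‖ ≤ ‖y‖ + ‖ζ‖ := norm_sub_le _ _
          _ ≤ 2 := by rw [hyn, hζ]; linarith
      have hlogynn : 0 ≤ Real.log 2 - Real.log ‖y - ζ‖ := by
        have := Real.log_le_log hyζ0 hyζ2
        linarith
      have hwyb : h y - δ * (Real.log 2 - Real.log ‖y - ζ‖) ≤ γ := by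
        rcases le_or_gt ‖y - ζ‖ η with hcase | hcase
        · have h1 : h y ≤ B := (hle y hy𝔻).trans (min_le_right _ _)
          have h2 : Real.log ‖y - ζ‖ ≤ Real.log η := Real.log_le_log hyζ0 hcase
          have h3 : δ * (Real.log 2 - Real.log η) ≤ δ * (Real.log 2 - Real.log ‖y - ζ‖) :=
            mul_le_mul_of_nonneg_left (by linarith) hδ.le
          rw [hlogη] at h3
          linarith
        · have h1 : h y ≤ 2 * poissonKernelD y ζ := (hle y hy𝔻).trans (min_le_left _ _)
          have h2 : poissonKernelD y ζ ≤ (1 - ρ ^ 2) / η ^ 2 := by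
            rw [poissonKernelD, hyn]
            apply div_le_div_of_nonneg_left (by nlinarith) (by positivity)
            nlinarith [hcase.le, hη0]
          have hηsq : (0:ℝ) < η ^ 2 := pow_pos hη0 2
          have h1ρ : 1 - ρ ≤ γ * η ^ 2 / 4 := by linarith
          have h3 : 2 * ((1 - ρ ^ 2) / η ^ 2) ≤ γ := by
            have e : 2 * ((1 - ρ ^ 2) / η ^ 2) = (2 * (1 - ρ ^ 2)) / η ^ 2 := by ring
            rw [e, div_le_iff₀ hηsq]
            nlinarith [mul_le_mul_of_nonneg_right h1ρ (by norm_num : (0:ℝ) ≤ 4),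
              sq_nonneg (1 - ρ)]
          have h4 : 0 ≤ δ * (Real.log 2 - Real.log ‖y - ζ‖) := mul_nonneg hδ.le hlogynn
          linarith
      linarith [hwy, hwyb]
    by_contra hcon
    push_neg at hcon
    have := hwle ((h z₀ - δ * (Real.log 2 - Real.log ‖z₀ - ζ‖)) / 2) (by linarith)
    linarith
  by_contra hcon
  push_neg at hcon
  set L := Real.log 2 - Real.log ‖z₀ - ζ‖ with hL
  have hδ0 : 0 < h z₀ / (2 * L) := by positivity
  have hkey := key (h z₀ / (2 * L)) hδ0
  have hδL : h z₀ / (2 * L) * L = h z₀ / 2 := by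
    field_simp
  linarith

end MTaux

/-- If `D` is an open disc internally tangent to the unit circle at `ζ ∈ 𝕋`, then
`𝔻 \ D` is minimally thin at `ζ`. -/
theorem stmt2 (c : ℂ) (r : ℝ) (ζ : ℂ) (hr : 0 < r)
    (hsub : ball c r ⊆ unitDisc) (hζ : ζ ∈ unitCircleSet) (htan : ‖c - ζ‖ = r) :
    MinimallyThin (unitDisc \ ball c r) ζ := by
  have hζ1 : ‖ζ‖ = 1 := hζ
  obtain ⟨hc, hr1⟩ := MTaux.center_eq hr hsub hζ1 htan
  set B : ℝ := 2 * ((1 - r) / r) + 2 with hBdef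
  have hκ0 : 0 ≤ (1 - r) / r := div_nonneg (by linarith) hr.le
  have hB0 : 0 < B := by positivity
  have hPcont := MTaux.poisson_contOn ζ hζ1
  have hucont : ContinuousOn (fun w => min (2 * poissonKernelD w ζ) B) unitDisc :=
    (continuousOn_const.mul hPcont).inf continuousOn_const
  have h2Pcont : ContinuousOn (fun w => 2 * poissonKernelD w ζ) unitDisc :=
    continuousOn_const.mul hPcont
  refine ⟨fun w => min (2 * poissonKernelD w ζ) B, ⟨⟨hucont.lowerSemicontinuousOn, ?_⟩, ?_, ?_⟩, ?_⟩
  · -- super-mean value property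
    intro z hz s hs hcb
    have hsph : sphere z s ⊆ unitDisc := fun x hx => hcb (sphere_subset_closedBall hx)
    have hiu := MTaux.intInt hucont z hs.le hsph
    have hiP := MTaux.intInt h2Pcont z hs.le hsph
    have hm1 : circleAvg (fun w => min (2 * poissonKernelD w ζ) B) z s
        ≤ circleAvg (fun w => 2 * poissonKernelD w ζ) z s :=
      MTaux.circleAvg_mono hs.le hiu hiP (fun w _ => min_le_left _ _)
    have h2P : circleAvg (fun w => 2 * poissonKernelD w ζ) z s = 2 * poissonKernelD z ζ := by
      rw [MTaux.circleAvg_const_mul 2 (fun w => poissonKernelD w ζ),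
        MTaux.mvp_poisson hζ1 hs hcb]
    have hm2' : circleAvg (fun w => min (2 * poissonKernelD w ζ) B) z s
        ≤ circleAvg (fun _ : ℂ => B) z s :=
      MTaux.circleAvg_mono hs.le hiu intervalIntegrable_const (fun w _ => min_le_right _ _)
    have hm2 : circleAvg (fun w => min (2 * poissonKernelD w ζ) B) z s ≤ B :=
      hm2'.trans_eq (MTaux.circleAvg_const B z s)
    exact le_min (hm1.trans_eq h2P) hm2
  · intro z hz
    have hP0 : 0 < poissonKernelD z ζ := MTaux.poisson_pos hz hζ1
    exact lt_min (by linarith) hB0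
  · intro h hh hle
    exact MTaux.minorant_nonpos hζ1 hB0 hh hle
  · intro z hz
    have hz𝔻 : z ∈ unitDisc := hz.1
    have hzc : r ≤ ‖z - c‖ := by
      have h8 : z ∉ ball c r := hz.2
      rw [mem_ball, dist_eq_norm] at h8
      push_neg at h8
      exact h8
    have hPb : poissonKernelD z ζ ≤ (1 - r) / r := MTaux.poisson_bound hr hc hζ1 hz𝔻 hzc
    have hP0 : 0 < poissonKernelD z ζ := MTaux.poisson_pos hz𝔻 hζ1
    apply le_min
    · linarith
    · rw [hBdef]; linarith
end
end

section
/- Let f be holomorphic on 𝔻 with partial sums S_N about 0, and suppose S_{N_k} → f locally uniformly on 𝔻 with N_k → ∞. Then limsup_{k→∞} (1/N_k) log |S_{N_k}(z) − f(z)| ≤ log|z| for every z ∈ 𝔻. -/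
open Metric MeasureTheory Set Filter Topology

noncomputable section

/-- If `S_{N_k} → f` locally uniformly on `𝔻` with `N_k → ∞`, then
`limsup_k (1/N_k) log |S_{N_k}(z) - f(z)| ≤ log |z|` for every `z ∈ 𝔻`
(with the convention `log 0 = -∞`). -/
theorem stmt6 (f : ℂ → ℂ) (hf : DifferentiableOn ℂ f unitDisc)
    (N : ℕ → ℕ) (hN : StrictMono N)
    (hconv : TendstoLocallyUniformlyOn (fun k z => taylorSum f 0 (N k) z) f atTop unitDisc)
    (z : ℂ) (hz : z ∈ unitDisc) :
    Filter.limsup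
      (fun k => (((N k : ℝ)⁻¹ : ℝ) : EReal) * elog ‖taylorSum f 0 (N k) z - f z‖)
      atTop ≤ elog ‖z‖ := by
  have hz1 : ‖z‖ < 1 := hz
  have hf' : DifferentiableOn ℂ f (Metric.ball 0 1) := by
    convert hf using 1
    ext w
    simp [unitDisc, Metric.mem_ball, Complex.dist_eq]
  have hNR : Tendsto (fun k => (N k : ℝ)) atTop atTop :=
    tendsto_natCast_atTop_atTop.comp
      (tendsto_atTop_mono (fun n => hN.le_apply) tendsto_id)
  have hNpos : ∀ᶠ k in atTop, 1 ≤ N k :=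
    (tendsto_atTop_mono (fun n => hN.le_apply) tendsto_id).eventually_ge_atTop 1
  -- the key decay estimate
  have key : ∀ r : ℝ, ‖z‖ < r → r < 1 → ∃ C : ℝ, 0 < C ∧
      ∀ M : ℕ, ‖taylorSum f 0 M z - f z‖ ≤ C * (‖z‖ / r) ^ (M + 1) := by
    intro r hsr hr1
    have hr0 : 0 < r := lt_of_le_of_lt (norm_nonneg z) hsr
    set q : ℝ := ‖z‖ / r with hq
    have hq0 : 0 ≤ q := div_nonneg (norm_nonneg z) hr0.le
    have hq1 : q < 1 := (div_lt_one hr0).2 hsr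
    set g : ℕ → ℂ := fun n => ((n.factorial : ℂ))⁻¹ • z ^ n • iteratedDeriv n f 0 with hg
    set gw : ℕ → ℂ := fun n => ((n.factorial : ℂ))⁻¹ • (r : ℂ) ^ n • iteratedDeriv n f 0 with hgw
    have hsum : HasSum g (f z) := by
      have := Complex.hasSum_taylorSeries_on_ball hf' (by simpa [Metric.mem_ball, Complex.dist_eq] using hz1)
      simpa [hg] using this
    have hsumw : HasSum gw (f (r : ℂ)) := by
      have hw : (r : ℂ) ∈ Metric.ball (0:ℂ) 1 := by
        simp [Metric.mem_ball, Complex.dist_eq, abs_of_pos hr0, hr1]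
      have := Complex.hasSum_taylorSeries_on_ball hf' hw
      simpa [hgw] using this
    -- bound on the coefficients
    obtain ⟨C0, hC0⟩ := (hsumw.summable.tendsto_atTop_zero.norm.bddAbove_range)
    set C1 : ℝ := max C0 1 with hC1
    have hC1pos : (0:ℝ) < C1 := lt_of_lt_of_le one_pos (le_max_right _ _)
    have hgwle : ∀ n, ‖gw n‖ ≤ C1 := by
      intro n
      exact le_trans (hC0 (Set.mem_range_self n)) (le_max_left _ _)
    have hgle : ∀ n, ‖g n‖ ≤ C1 * q ^ n := by
      intro n
      have hzrq : ‖z‖ = r * q := by rw [hq]; field_simp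
      have h1 : ‖g n‖ = ‖gw n‖ * q ^ n := by
        simp only [hg, hgw, norm_smul, norm_pow, Complex.norm_real,
          Real.norm_eq_abs, abs_of_pos hr0]
        rw [hzrq, mul_pow]; ring
      rw [h1]
      exact mul_le_mul_of_nonneg_right (hgwle n) (pow_nonneg hq0 n)
    have h1q : 0 < 1 - q := by linarith
    refine ⟨C1 * (1 - q)⁻¹, mul_pos hC1pos (inv_pos.2 h1q), ?_⟩
    intro M
    have hts : taylorSum f 0 M z = ∑ n ∈ Finset.range (M + 1), g n := by
      unfold taylorSum
      refine Finset.sum_congr rfl fun n _ => ?_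
      simp [hg, smul_eq_mul, div_eq_mul_inv]
      ring
    have htail : taylorSum f 0 M z - f z = -∑' i, g (i + (M + 1)) := by
      rw [hts, ← hsum.tsum_eq, eq_neg_iff_add_eq_zero]
      have := Summable.sum_add_tsum_nat_add (f := g) (M + 1) hsum.summable
      linear_combination (norm := module) this
    rw [htail, norm_neg]
    have hsgeo : Summable (fun i => C1 * q ^ (i + (M+1))) := by
      refine ((summable_geometric_of_lt_one hq0 hq1).mul_left (C1 * q ^ (M+1))).congr
        fun i => ?_
      rw [pow_add]; ring
    have hsnorm : Summable (fun i => ‖g (i + (M+1))‖) :=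
      Summable.of_nonneg_of_le (fun i => norm_nonneg _) (fun i => hgle _) hsgeo
    calc ‖∑' i, g (i + (M + 1))‖ ≤ ∑' i, ‖g (i + (M+1))‖ := norm_tsum_le_tsum_norm hsnorm
      _ ≤ ∑' i, C1 * q ^ (i + (M+1)) := Summable.tsum_le_tsum (fun i => hgle _) hsnorm hsgeo
      _ = C1 * (1-q)⁻¹ * q ^ (M+1) := by
          simp_rw [pow_add]
          rw [tsum_mul_left, tsum_mul_right, tsum_geometric_of_lt_one hq0 hq1]
          ring
  -- case z = 0
  rcases eq_or_ne z 0 with rfl | hz0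
  · have hT : ∀ n : ℕ, taylorSum f 0 n 0 = f 0 := by
      intro n
      unfold taylorSum
      rw [Finset.sum_eq_single 0]
      · simp [iteratedDeriv_zero]
      · intro b _ hb
        simp [zero_pow hb]
      · simp
    refine limsup_le_of_le (by isBoundedDefault) ?_
    filter_upwards [hNpos] with k hk
    have hnk : (0:ℝ) < (N k : ℝ) := by exact_mod_cast hk
    have h1 : elog ‖taylorSum f 0 (N k) 0 - f 0‖ = ⊥ := by simp [hT, elog]
    rw [h1, EReal.coe_mul_bot_of_pos (inv_pos.2 hnk)]
    exact bot_le
  · have hs0 : 0 < ‖z‖ := norm_pos_iff.2 hz0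
    have hmain : ∀ r : ℝ, ‖z‖ < r → r < 1 →
        Filter.limsup
          (fun k => (((N k : ℝ)⁻¹ : ℝ) : EReal) * elog ‖taylorSum f 0 (N k) z - f z‖)
          atTop ≤ ((Real.log (‖z‖ / r) : ℝ) : EReal) := by
      intro r hsr hr1
      have hr0 : 0 < r := lt_trans hs0 hsr
      obtain ⟨C, hC, hbd⟩ := key r hsr hr1
      set q : ℝ := ‖z‖ / r with hq
      have hq0 : 0 < q := div_pos hs0 hr0
      set b : ℕ → ℝ :=
        fun k => (N k : ℝ)⁻¹ * Real.log C + (1 + (N k : ℝ)⁻¹) * Real.log q with hbdef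
      have hb : Tendsto b atTop (𝓝 (Real.log q)) := by
        have hinv : Tendsto (fun k => ((N k : ℝ))⁻¹) atTop (𝓝 0) :=
          tendsto_inv_atTop_zero.comp hNR
        have h2 : Tendsto (fun k => (1:ℝ) + ((N k : ℝ))⁻¹) atTop (𝓝 ((1:ℝ) + 0)) :=
          tendsto_const_nhds.add hinv
        have := (hinv.mul_const (Real.log C)).add (h2.mul_const (Real.log q))
        simpa using this
      have hev : (fun k => (((N k : ℝ)⁻¹ : ℝ) : EReal) * elog ‖taylorSum f 0 (N k) z - f z‖)
          ≤ᶠ[atTop] fun k => ((b k : ℝ) : EReal) := by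
        filter_upwards [hNpos] with k hk
        have hn0 : (0:ℝ) < (N k : ℝ) := by exact_mod_cast hk
        by_cases hd : ‖taylorSum f 0 (N k) z - f z‖ = 0
        · rw [hd]
          simp only [elog, if_pos]
          rw [EReal.coe_mul_bot_of_pos (inv_pos.2 hn0)]
          exact bot_le
        · simp only [elog, if_neg hd]
          rw [← EReal.coe_mul, EReal.coe_le_coe_iff]
          have hdpos : 0 < ‖taylorSum f 0 (N k) z - f z‖ :=
            lt_of_le_of_ne (norm_nonneg _) (Ne.symm hd)
          have hlog : Real.log ‖taylorSum f 0 (N k) z - f z‖ ≤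
              Real.log C + ((N k : ℝ) + 1) * Real.log q := by
            calc Real.log ‖taylorSum f 0 (N k) z - f z‖
                ≤ Real.log (C * q ^ (N k + 1)) := Real.log_le_log hdpos (hbd (N k))
              _ = Real.log C + ((N k : ℝ) + 1) * Real.log q := by
                  rw [Real.log_mul hC.ne' (pow_ne_zero _ hq0.ne'), Real.log_pow]
                  push_cast; ring
          have h2 := mul_le_mul_of_nonneg_left hlog (inv_nonneg.2 hn0.le)
          refine le_trans h2 (le_of_eq ?_)
          rw [hbdef]
          field_simp
      calc Filter.limsup
            (fun k => (((N k : ℝ)⁻¹ : ℝ) : EReal) * elog ‖taylorSum f 0 (N k) z - f z‖) atTop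
          ≤ Filter.limsup (fun k => ((b k : ℝ) : EReal)) atTop := limsup_le_limsup hev
        _ = ((Real.log q : ℝ) : EReal) := (EReal.tendsto_coe.2 hb).limsup_eq
    by_contra hcon
    push_neg at hcon
    rw [elog, if_neg hs0.ne'] at hcon
    obtain ⟨y, hy1, hy2⟩ := EReal.exists_between_coe_real hcon
    have hy1' : Real.log ‖z‖ < y := EReal.coe_lt_coe_iff.1 hy1
    set ε : ℝ := y - Real.log ‖z‖ with hε
    have hεpos : 0 < ε := sub_pos.2 hy1'
    set r : ℝ := max ((‖z‖ + 1) / 2) (Real.exp (-(ε / 2))) with hr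
    have hsr : ‖z‖ < r := lt_of_lt_of_le (by linarith) (le_max_left _ _)
    have hr1 : r < 1 := max_lt (by linarith) (Real.exp_lt_one_iff.2 (by linarith))
    have hr0 : 0 < r := lt_trans hs0 hsr
    have hlogr : -(ε / 2) ≤ Real.log r := by
      rw [← Real.log_exp (-(ε / 2))]
      exact Real.log_le_log (Real.exp_pos _) (le_max_right _ _)
    have hlt : Real.log (‖z‖ / r) < y := by
      rw [Real.log_div hs0.ne' hr0.ne']
      linarith
    exact absurd (lt_of_le_of_lt (hmain r hsr hr1) (EReal.coe_lt_coe_iff.2 hlt))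
      (not_lt.2 hy2.le)
end
end
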